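/- (Corollary 6.) Let Z be a finite alphabet with |Z| ≥ 1, let H be a finite alphabet, m ≥ 1, and let Q be a learning kernel from Z^m to pmfs on H that is invariant under permutations of the training set. Then for every probability mass function P on Z, the mutual affinity satisfies I_P(Z_trn, H) ≤ √(|Z|·log(1+m)/(2m)) (logarithm in nats); hence the learning capacity satisfies C^(m) ≤ √(|Z|·log(1+m)/(2m)). -/

import Mathlib

/-- Total variation distance between two pmfs: `1 - ∑ min`. -/
noncomputable def tv {A : Type*} (p q : A → ℝ) : ℝ := 1 - ∑' a, min (p a) (q a)

/-- `p` is a probability mass function: nonnegative and summing to `1`. -/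
def IsPMF {A : Type*} (p : A → ℝ) : Prop := (∀ a, 0 ≤ p a) ∧ HasSum p 1

/-- Product pmf `P^{⊗m}` of `m` i.i.d. draws from `P`. -/
noncomputable def prodPMF {Z : Type*} (m : ℕ) (P : Z → ℝ) (S : Fin m → Z) : ℝ :=
  ∏ i, P (S i)

/-- Joint pmf of a uniformly drawn training example `Z_trn` and the inferred
hypothesis `H`: `μ(z,h) = ∑_S P^{⊗m}(S) · (1/m)∑_i 1{S_i = z} · Q(h|S)`. -/
noncomputable def jointZH {Z H : Type*} (m : ℕ) (P : Z → ℝ)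
    (Q : (Fin m → Z) → H → ℝ) (z : Z) (h : H) : ℝ :=
  haveI := Classical.decEq Z
  ∑' S : Fin m → Z,
    prodPMF m P S * ((1 / (m : ℝ)) * ∑ i, if S i = z then (1 : ℝ) else 0) * Q S h

/-- Marginal of `Z_trn` under the joint pmf `jointZH`. -/
noncomputable def margZ {Z H : Type*} (m : ℕ) (P : Z → ℝ)
    (Q : (Fin m → Z) → H → ℝ) (z : Z) : ℝ :=
  ∑' h : H, jointZH m P Q z h

/-- Marginal of the hypothesis `H` under the joint pmf `jointZH`. -/
noncomputable def margH {Z H : Type*} (m : ℕ) (P : Z → ℝ)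
    (Q : (Fin m → Z) → H → ℝ) (h : H) : ℝ :=
  ∑' z : Z, jointZH m P Q z h

/-- Mutual affinity `I(Z_trn, H) = ‖μ_Z ⊗ μ_H, μ‖`. -/
noncomputable def affinity {Z H : Type*} (m : ℕ) (P : Z → ℝ)
    (Q : (Fin m → Z) → H → ℝ) : ℝ :=
  tv (fun p : Z × H => margZ m P Q p.1 * margH m P Q p.2)
    (fun p : Z × H => jointZH m P Q p.1 p.2)

/-- True risk `R(𝓛) = ∑_S P^{⊗m}(S) ∑_h Q(h|S) ∑_z P(z)·L(h,z)`. -/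
noncomputable def trueRisk {Z H : Type*} (m : ℕ) (P : Z → ℝ)
    (Q : (Fin m → Z) → H → ℝ) (L : H → Z → ℝ) : ℝ :=
  ∑' S : Fin m → Z, prodPMF m P S * ∑' h : H, Q S h * ∑' z : Z, P z * L h z

/-- Empirical risk `R_emp(𝓛) = ∑_S P^{⊗m}(S) ∑_h Q(h|S)·(1/m)∑_i L(h,S_i)`. -/
noncomputable def empRisk {Z H : Type*} (m : ℕ) (P : Z → ℝ)
    (Q : (Fin m → Z) → H → ℝ) (L : H → Z → ℝ) : ℝ :=
  ∑' S : Fin m → Z, prodPMF m P S * ∑' h : H, Q S h * ((1 / (m : ℝ)) * ∑ i, L h (S i))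

/-- Learning capacity `C^(m)(𝓛) = sup_P I(Z_trn, H)`. -/
noncomputable def capacity {Z H : Type*} (m : ℕ)
    (Q : (Fin m → Z) → H → ℝ) : ℝ :=
  sSup {c : ℝ | ∃ P : Z → ℝ, IsPMF P ∧ c = affinity m P Q}



open Finset

section aux

variable {Z : Type*} [Fintype Z]

/-- Expectation of a product of coordinate functions under the product pmf. -/
lemma expProd {m : ℕ} (P : Z → ℝ) (g : Fin m → Z → ℝ) :
    ∑ S : Fin m → Z, (∏ i, P (S i)) * ∏ i, g i (S i) = ∏ i, ∑ z, P z * g i z := by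
  classical
  rw [Fintype.prod_sum (fun i z => P z * g i z)]
  exact Finset.sum_congr rfl fun S _ => (Finset.prod_mul_distrib).symm

lemma sumProdPMF {m : ℕ} (P : Z → ℝ) (hP1 : ∑ z, P z = 1) :
    ∑ S : Fin m → Z, (∏ i, P (S i)) = 1 := by
  have h := expProd (m := m) P (fun _ _ => (1:ℝ))
  simpa [hP1] using h

lemma expSingle {m : ℕ} (P : Z → ℝ) (hP1 : ∑ z, P z = 1) (i : Fin m) (f : Z → ℝ) :
    ∑ S : Fin m → Z, (∏ k, P (S k)) * f (S i) = ∑ z, P z * f z := by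
  classical
  have h := expProd P (fun k w => if k = i then f w else (1:ℝ))
  have h1 : ∀ S : Fin m → Z, (∏ k, if k = i then f (S k) else (1:ℝ)) = f (S i) := by
    intro S; simp
  have h2 : (∏ k, ∑ z, P z * (if k = i then f z else (1:ℝ)))
      = ∑ z, P z * f z := by
    have : ∀ k, (∑ z, P z * (if k = i then f z else (1:ℝ)))
        = if k = i then (∑ z, P z * f z) else 1 := by
      intro k; by_cases hk : k = i <;> simp [hk, hP1]
    rw [Finset.prod_congr rfl (fun k _ => this k)]
    simp
  calc ∑ S : Fin m → Z, (∏ k, P (S k)) * f (S i)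
      = ∑ S : Fin m → Z, (∏ k, P (S k)) * ∏ k, (if k = i then f (S k) else (1:ℝ)) := by
        exact Finset.sum_congr rfl fun S _ => by rw [h1]
    _ = ∑ z, P z * f z := by rw [h, h2]

lemma expPair {m : ℕ} (P : Z → ℝ) (hP1 : ∑ z, P z = 1) {i j : Fin m} (hij : i ≠ j)
    (φ ψ : Z → ℝ) :
    ∑ S : Fin m → Z, (∏ k, P (S k)) * (φ (S i) * ψ (S j))
      = (∑ z, P z * φ z) * (∑ z, P z * ψ z) := by
  classical
  have h := expProd P (fun k w => (if k = i then φ w else (1:ℝ)) * (if k = j then ψ w else (1:ℝ)))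
  have h1 : ∀ S : Fin m → Z,
      (∏ k, (if k = i then φ (S k) else (1:ℝ)) * (if k = j then ψ (S k) else (1:ℝ)))
        = φ (S i) * ψ (S j) := by
    intro S; rw [Finset.prod_mul_distrib]; simp
  have h2 : (∏ k, ∑ z, P z * ((if k = i then φ z else (1:ℝ)) * (if k = j then ψ z else (1:ℝ))))
      = (∑ z, P z * φ z) * (∑ z, P z * ψ z) := by
    have hterm : ∀ k, (∑ z, P z * ((if k = i then φ z else (1:ℝ)) * (if k = j then ψ z else (1:ℝ))))
        = (if k = i then (∑ z, P z * φ z) else 1) * (if k = j then (∑ z, P z * ψ z) else 1) := by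
      intro k
      by_cases hk : k = i
      · subst hk
        simp [hij, hP1]
      · by_cases hk' : k = j <;> simp [hk, hk', hP1, Ne.symm hij]
    rw [Finset.prod_congr rfl (fun k _ => hterm k), Finset.prod_mul_distrib]
    simp
  calc ∑ S : Fin m → Z, (∏ k, P (S k)) * (φ (S i) * ψ (S j))
      = ∑ S : Fin m → Z, (∏ k, P (S k)) *
          ∏ k, (if k = i then φ (S k) else (1:ℝ)) * (if k = j then ψ (S k) else (1:ℝ)) := by
        exact Finset.sum_congr rfl fun S _ => by rw [h1]
    _ = _ := by rw [h, h2]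

/-- Weighted Cauchy–Schwarz: `E|f| ≤ √(E f²)`. -/
lemma absExp_le_sqrt {A : Type*} [Fintype A] (w f : A → ℝ) (hw : ∀ a, 0 ≤ w a)
    (hw1 : ∑ a, w a = 1) :
    ∑ a, w a * |f a| ≤ Real.sqrt (∑ a, w a * f a ^ 2) := by
  have hcs := Finset.sum_mul_sq_le_sq_mul_sq Finset.univ
    (fun a => Real.sqrt (w a)) (fun a => Real.sqrt (w a) * |f a|)
  have e1 : ∀ a : A, Real.sqrt (w a) * (Real.sqrt (w a) * |f a|) = w a * |f a| := by
    intro a; rw [← mul_assoc, Real.mul_self_sqrt (hw a)]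
  have e2 : ∀ a : A, Real.sqrt (w a) ^ 2 = w a := fun a => Real.sq_sqrt (hw a)
  have e3 : ∀ a : A, (Real.sqrt (w a) * |f a|) ^ 2 = w a * f a ^ 2 := by
    intro a; rw [mul_pow, Real.sq_sqrt (hw a), sq_abs]
  rw [Finset.sum_congr rfl (fun a _ => e1 a), Finset.sum_congr rfl (fun a _ => e2 a),
    Finset.sum_congr rfl (fun a _ => e3 a), hw1, one_mul] at hcs
  have hnn : 0 ≤ ∑ a, w a * |f a| :=
    Finset.sum_nonneg fun a _ => mul_nonneg (hw a) (abs_nonneg _)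
  calc ∑ a, w a * |f a| = Real.sqrt ((∑ a, w a * |f a|) ^ 2) := (Real.sqrt_sq hnn).symm
    _ ≤ Real.sqrt (∑ a, w a * f a ^ 2) := Real.sqrt_le_sqrt hcs

/-- Total variation equals half the `L¹` distance for pmfs. -/
lemma tv_eq_half_l1 {A : Type*} [Fintype A] (p q : A → ℝ) (hp : ∑ a, p a = 1)
    (hq : ∑ a, q a = 1) : tv p q = (∑ a, |p a - q a|) / 2 := by
  unfold tv
  rw [tsum_fintype]
  have hmin : ∀ a : A, min (p a) (q a) = (p a + q a - |p a - q a|) / 2 := by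
    intro a
    rcases le_total (p a) (q a) with h | h
    · rw [min_eq_left h, abs_of_nonpos (by linarith)]; ring
    · rw [min_eq_right h, abs_of_nonneg (by linarith)]; ring
  rw [Finset.sum_congr rfl (fun a _ => hmin a)]
  rw [← Finset.sum_div, Finset.sum_sub_distrib, Finset.sum_add_distrib, hp, hq]
  ring

end aux
section aux2
open Finset
variable {Z : Type*} [Fintype Z]

lemma varCnt {m : ℕ} [DecidableEq Z] (P : Z → ℝ) (hP0 : ∀ z, 0 ≤ P z)
    (hP1 : ∑ z, P z = 1) (z : Z) :
    ∑ S : Fin m → Z,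
        (∏ i, P (S i)) * ((∑ i, if S i = z then (1:ℝ) else 0) - m * P z) ^ 2
      ≤ m * P z := by
  set p := P z with hp
  set φ : Z → ℝ := fun w => (if w = z then (1:ℝ) else 0) - p with hφ
  have hdev : ∀ S : Fin m → Z,
      (∑ i, if S i = z then (1:ℝ) else 0) - m * p = ∑ i, φ (S i) := by
    intro S
    simp only [hφ, Finset.sum_sub_distrib, Finset.sum_const, Finset.card_univ,
      Fintype.card_fin, nsmul_eq_mul]
  have hφ0 : ∑ w, P w * φ w = 0 := by
    have e : ∀ w, P w * φ w = (if w = z then P w else 0) - P w * p := by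
      intro w; by_cases hw : w = z <;> simp [hφ, hw] <;> ring
    rw [Finset.sum_congr rfl fun w _ => e w, Finset.sum_sub_distrib,
      Finset.sum_ite_eq' Finset.univ z (fun w => P w), ← Finset.sum_mul, hP1]
    simp [hp]
  have hφ2 : ∑ w, P w * φ w ^ 2 = p - p ^ 2 := by
    have e : ∀ w, P w * φ w ^ 2 = (1 - 2 * p) * (if w = z then P w else 0) + p ^ 2 * P w := by
      intro w; by_cases hw : w = z <;> simp [hφ, hw] <;> ring
    rw [Finset.sum_congr rfl fun w _ => e w, Finset.sum_add_distrib, ← Finset.mul_sum,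
      ← Finset.mul_sum, Finset.sum_ite_eq' Finset.univ z (fun w => P w), hP1]
    simp [hp]; ring
  have hterm : ∀ i j : Fin m,
      ∑ S : Fin m → Z, (∏ k, P (S k)) * (φ (S i) * φ (S j))
        = if i = j then p - p ^ 2 else 0 := by
    intro i j
    by_cases hij : i = j
    · subst hij
      rw [if_pos rfl, expSingle P hP1 i (fun w => φ w * φ w)]
      rw [← hφ2]
      exact Finset.sum_congr rfl fun w _ => by ring
    · rw [if_neg hij, expPair P hP1 hij φ φ, hφ0, zero_mul]
  have key : ∑ S : Fin m → Z,
      (∏ i, P (S i)) * ((∑ i, if S i = z then (1:ℝ) else 0) - m * p) ^ 2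
      = m * (p - p ^ 2) := by
    calc ∑ S : Fin m → Z,
        (∏ i, P (S i)) * ((∑ i, if S i = z then (1:ℝ) else 0) - m * p) ^ 2
        = ∑ S : Fin m → Z, (∏ i, P (S i)) * ∑ i, ∑ j, φ (S i) * φ (S j) := by
          refine Finset.sum_congr rfl fun S _ => ?_
          rw [hdev S, sq, Finset.sum_mul_sum]
      _ = ∑ i : Fin m, ∑ j : Fin m,
            ∑ S : Fin m → Z, (∏ k, P (S k)) * (φ (S i) * φ (S j)) := by
          simp_rw [Finset.mul_sum]
          rw [Finset.sum_comm]
          exact Finset.sum_congr rfl fun i _ => Finset.sum_comm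
      _ = ∑ i : Fin m, ∑ j : Fin m, (if i = j then p - p ^ 2 else 0) := by
          exact Finset.sum_congr rfl fun i _ => Finset.sum_congr rfl fun j _ => hterm i j
      _ = m * (p - p ^ 2) := by
          simp [Finset.sum_ite_eq, Finset.sum_const, Finset.card_univ, mul_comm]; ring
  rw [key]
  have hp0 : 0 ≤ p := hP0 z
  nlinarith [sq_nonneg p, Nat.cast_nonneg (α := ℝ) m]

lemma devBound {m : ℕ} [DecidableEq Z] (P : Z → ℝ) (hP0 : ∀ z, 0 ≤ P z)
    (hP1 : ∑ z, P z = 1) (hm : 1 ≤ m) (z : Z) :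
    ∑ S : Fin m → Z,
        (∏ i, P (S i)) * |P z - (1 / (m:ℝ)) * ∑ i, if S i = z then (1:ℝ) else 0|
      ≤ Real.sqrt (P z / m) := by
  have hm0 : (0:ℝ) < m := by exact_mod_cast hm
  have hW0 : ∀ S : Fin m → Z, 0 ≤ ∏ i, P (S i) :=
    fun S => Finset.prod_nonneg fun i _ => hP0 _
  have hW1 := sumProdPMF (m := m) P hP1
  have hcs := absExp_le_sqrt (fun S : Fin m → Z => ∏ i, P (S i))
    (fun S => P z - (1 / (m:ℝ)) * ∑ i, if S i = z then (1:ℝ) else 0) hW0 hW1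
  refine hcs.trans (Real.sqrt_le_sqrt ?_)
  have e : ∀ S : Fin m → Z,
      (P z - (1 / (m:ℝ)) * ∑ i, if S i = z then (1:ℝ) else 0) ^ 2
      = (1 / (m:ℝ)) ^ 2 * ((∑ i, if S i = z then (1:ℝ) else 0) - m * P z) ^ 2 := by
    intro S; field_simp; ring
  calc ∑ S : Fin m → Z, (∏ i, P (S i)) *
        (P z - (1 / (m:ℝ)) * ∑ i, if S i = z then (1:ℝ) else 0) ^ 2
      = (1 / (m:ℝ)) ^ 2 * ∑ S : Fin m → Z,
          (∏ i, P (S i)) * ((∑ i, if S i = z then (1:ℝ) else 0) - m * P z) ^ 2 := by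
        rw [Finset.mul_sum]
        exact Finset.sum_congr rfl fun S _ => by rw [e S]; ring
    _ ≤ (1 / (m:ℝ)) ^ 2 * (m * P z) := by
        have := varCnt (m := m) P hP0 hP1 z
        exact mul_le_mul_of_nonneg_left this (by positivity)
    _ = P z / m := by field_simp

end aux2

/-- Corollary 6: for a permutation-invariant learning machine on
a finite observation alphabet `Z` with `|Z| ≥ 1` and finite hypothesis alphabet,
the mutual affinity is at most `√(|Z|·log(1+m)/(2m))` for every pmf `P`, and
hence the learning capacity satisfies the same bound. -/
theorem stmt17 {Z H : Type*} [Fintype Z] [Fintype H] (m : ℕ) (hm : 1 ≤ m)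
    (hZ : 1 ≤ Fintype.card Z)
    (Q : (Fin m → Z) → H → ℝ) (hQ : ∀ S, IsPMF (Q S))
    (hperm : ∀ (S : Fin m → Z) (σ : Equiv.Perm (Fin m)), Q (S ∘ σ) = Q S) :
    (∀ P : Z → ℝ, IsPMF P →
      affinity m P Q ≤
        Real.sqrt ((Fintype.card Z : ℝ) * Real.log (1 + m) / (2 * m))) ∧
      capacity m Q ≤
        Real.sqrt ((Fintype.card Z : ℝ) * Real.log (1 + m) / (2 * m)) := by
  letI : DecidableEq Z := Classical.decEq Z
  have hm0 : (0:ℝ) < m := by exact_mod_cast hm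
  have hc1 : (1:ℝ) ≤ Fintype.card Z := by exact_mod_cast hZ
  have main : ∀ P : Z → ℝ, IsPMF P →
      affinity m P Q ≤ Real.sqrt ((Fintype.card Z : ℝ) * Real.log (1 + m) / (2 * m)) := by
    intro P hP
    obtain ⟨hP0, hPs⟩ := hP
    have hP1 : ∑ z, P z = 1 := by rw [← tsum_fintype (L := SummationFilter.unconditional _)]; exact hPs.tsum_eq
    have hQ0 : ∀ S h, 0 ≤ Q S h := fun S => (hQ S).1
    have hQ1 : ∀ S, ∑ h, Q S h = 1 := fun S => by
      rw [← tsum_fintype (L := SummationFilter.unconditional _)]; exact (hQ S).2.tsum_eq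
    have hW0 : ∀ S : Fin m → Z, 0 ≤ ∏ i, P (S i) :=
      fun S => Finset.prod_nonneg fun i _ => hP0 _
    have hW1 : ∑ S : Fin m → Z, ∏ i, P (S i) = 1 := sumProdPMF P hP1
    -- joint pmf as a finite sum
    have hJ : ∀ (z : Z) (h : H), jointZH m P Q z h
        = ∑ S : Fin m → Z, (∏ i, P (S i)) *
            ((1 / (m:ℝ)) * ∑ i, if S i = z then (1:ℝ) else 0) * Q S h := by
      intro z h
      unfold jointZH
      rw [tsum_fintype]
      rfl
    have hcntsum : ∀ S : Fin m → Z,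
        ∑ z, (∑ i, if S i = z then (1:ℝ) else 0) = m := by
      intro S
      rw [Finset.sum_comm]
      simp [Finset.sum_ite_eq]
    have hmargH : ∀ h, margH m P Q h = ∑ S : Fin m → Z, (∏ i, P (S i)) * Q S h := by
      intro h
      have h0 : margH m P Q h = ∑ z, jointZH m P Q z h := tsum_fintype _
      rw [h0, Finset.sum_congr rfl fun z _ => hJ z h, Finset.sum_comm]
      refine Finset.sum_congr rfl fun S _ => ?_
      calc ∑ z, (∏ i, P (S i)) *
            ((1 / (m:ℝ)) * ∑ i, if S i = z then (1:ℝ) else 0) * Q S h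
          = ((∏ i, P (S i)) * Q S h * (1 / (m:ℝ))) *
              ∑ z, (∑ i, if S i = z then (1:ℝ) else 0) := by
            rw [Finset.mul_sum]
            exact Finset.sum_congr rfl fun z _ => by ring
        _ = (∏ i, P (S i)) * Q S h := by rw [hcntsum S]; field_simp
    have hmargZ : ∀ z, margZ m P Q z = P z := by
      intro z
      have h0 : margZ m P Q z = ∑ h, jointZH m P Q z h := tsum_fintype _
      rw [h0, Finset.sum_congr rfl fun h _ => hJ z h, Finset.sum_comm]
      have e1 : ∀ S : Fin m → Z, ∑ h, (∏ i, P (S i)) *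
          ((1 / (m:ℝ)) * ∑ i, if S i = z then (1:ℝ) else 0) * Q S h
          = (∏ i, P (S i)) * ((1 / (m:ℝ)) * ∑ i, if S i = z then (1:ℝ) else 0) := by
        intro S; rw [← Finset.mul_sum, hQ1 S, mul_one]
      rw [Finset.sum_congr rfl fun S _ => e1 S]
      have e3 : ∑ S : Fin m → Z, (∏ i, P (S i)) * (∑ i, if S i = z then (1:ℝ) else 0)
          = (m:ℝ) * P z := by
        calc ∑ S : Fin m → Z, (∏ i, P (S i)) * (∑ i, if S i = z then (1:ℝ) else 0)
            = ∑ S : Fin m → Z, ∑ i, (∏ k, P (S k)) * (if S i = z then (1:ℝ) else 0) := by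
              exact Finset.sum_congr rfl fun S _ => Finset.mul_sum _ _ _
          _ = ∑ i : Fin m, ∑ S : Fin m → Z,
                (∏ k, P (S k)) * (if S i = z then (1:ℝ) else 0) := Finset.sum_comm
          _ = ∑ _i : Fin m, ∑ w, P w * (if w = z then (1:ℝ) else 0) :=
              Finset.sum_congr rfl fun i _ =>
                expSingle P hP1 i (fun w => if w = z then (1:ℝ) else 0)
          _ = (m:ℝ) * P z := by
              simp [mul_ite, Finset.sum_ite_eq', mul_comm]
      calc ∑ S : Fin m → Z, (∏ i, P (S i)) *
            ((1 / (m:ℝ)) * ∑ i, if S i = z then (1:ℝ) else 0)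
          = (1 / (m:ℝ)) * ∑ S : Fin m → Z,
              (∏ i, P (S i)) * (∑ i, if S i = z then (1:ℝ) else 0) := by
            rw [Finset.mul_sum]
            exact Finset.sum_congr rfl fun S _ => by ring
        _ = P z := by rw [e3]; field_simp
    -- sums of the two pmfs over pairs
    have hsum1 : ∑ pr : Z × H, margZ m P Q pr.1 * margH m P Q pr.2 = 1 := by
      rw [Fintype.sum_prod_type, ← Fintype.sum_mul_sum]
      rw [Finset.sum_congr rfl fun z _ => hmargZ z, hP1,
        Finset.sum_congr rfl fun h _ => hmargH h, one_mul, Finset.sum_comm]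
      rw [Finset.sum_congr rfl fun S (_ : S ∈ Finset.univ) => (Finset.mul_sum _ _ _).symm]
      rw [Finset.sum_congr rfl fun S (_ : S ∈ Finset.univ) => by rw [hQ1 S, mul_one]]
      exact hW1
    have hsum2 : ∑ pr : Z × H, jointZH m P Q pr.1 pr.2 = 1 := by
      rw [Fintype.sum_prod_type]
      have : ∀ z, ∑ h, jointZH m P Q z h = margZ m P Q z :=
        fun z => (tsum_fintype _).symm
      rw [Finset.sum_congr rfl fun z _ => this z,
        Finset.sum_congr rfl fun z _ => hmargZ z, hP1]
    have haff : affinity m P Q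
        = (∑ pr : Z × H, |margZ m P Q pr.1 * margH m P Q pr.2
            - jointZH m P Q pr.1 pr.2|) / 2 :=
      tv_eq_half_l1 _ _ hsum1 hsum2
    -- per-pair bound
    have step1 : ∀ (z : Z) (h : H),
        |margZ m P Q z * margH m P Q h - jointZH m P Q z h|
          ≤ ∑ S : Fin m → Z, ((∏ i, P (S i)) * Q S h) *
              |P z - (1 / (m:ℝ)) * ∑ i, if S i = z then (1:ℝ) else 0| := by
      intro z h
      rw [hmargZ z, hmargH h, hJ z h]
      have e : P z * (∑ S : Fin m → Z, (∏ i, P (S i)) * Q S h)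
          - ∑ S : Fin m → Z, (∏ i, P (S i)) *
              ((1 / (m:ℝ)) * ∑ i, if S i = z then (1:ℝ) else 0) * Q S h
          = ∑ S : Fin m → Z, ((∏ i, P (S i)) * Q S h) *
              (P z - (1 / (m:ℝ)) * ∑ i, if S i = z then (1:ℝ) else 0) := by
        rw [Finset.mul_sum, ← Finset.sum_sub_distrib]
        exact Finset.sum_congr rfl fun S _ => by ring
      rw [e]
      refine (Finset.abs_sum_le_sum_abs _ _).trans (le_of_eq ?_)
      refine Finset.sum_congr rfl fun S _ => ?_
      rw [abs_mul, abs_of_nonneg (mul_nonneg (hW0 S) (hQ0 S h))]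
    -- L1 bound
    have hL1 : ∑ pr : Z × H, |margZ m P Q pr.1 * margH m P Q pr.2
          - jointZH m P Q pr.1 pr.2|
        ≤ ∑ z, Real.sqrt (P z / m) := by
      rw [Fintype.sum_prod_type]
      calc ∑ z, ∑ h, |margZ m P Q z * margH m P Q h - jointZH m P Q z h|
          ≤ ∑ z, ∑ h, ∑ S : Fin m → Z, ((∏ i, P (S i)) * Q S h) *
              |P z - (1 / (m:ℝ)) * ∑ i, if S i = z then (1:ℝ) else 0| :=
            Finset.sum_le_sum fun z _ => Finset.sum_le_sum fun h _ => step1 z h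
        _ = ∑ z, ∑ S : Fin m → Z, (∏ i, P (S i)) *
              |P z - (1 / (m:ℝ)) * ∑ i, if S i = z then (1:ℝ) else 0| := by
            refine Finset.sum_congr rfl fun z _ => ?_
            rw [Finset.sum_comm]
            refine Finset.sum_congr rfl fun S _ => ?_
            calc ∑ h, ((∏ i, P (S i)) * Q S h) *
                  |P z - (1 / (m:ℝ)) * ∑ i, if S i = z then (1:ℝ) else 0|
                = ∑ h, ((∏ i, P (S i)) *
                    |P z - (1 / (m:ℝ)) * ∑ i, if S i = z then (1:ℝ) else 0|) * Q S h :=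
                  Finset.sum_congr rfl fun h _ => by ring
              _ = ((∏ i, P (S i)) *
                    |P z - (1 / (m:ℝ)) * ∑ i, if S i = z then (1:ℝ) else 0|) *
                    ∑ h, Q S h := (Finset.mul_sum _ _ _).symm
              _ = (∏ i, P (S i)) *
                    |P z - (1 / (m:ℝ)) * ∑ i, if S i = z then (1:ℝ) else 0| := by
                  rw [hQ1 S, mul_one]
        _ ≤ ∑ z, Real.sqrt (P z / m) :=
            Finset.sum_le_sum fun z _ => devBound P hP0 hP1 hm z
    -- Cauchy–Schwarz over Z
    have hCS : ∑ z, Real.sqrt (P z / m) ≤ Real.sqrt ((Fintype.card Z : ℝ) / m) := by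
      have hcs2 := Finset.sum_mul_sq_le_sq_mul_sq Finset.univ
        (fun _ : Z => (1:ℝ)) (fun z => Real.sqrt (P z / m))
      have e2 : ∀ z : Z, Real.sqrt (P z / m) ^ 2 = P z / m :=
        fun z => Real.sq_sqrt (div_nonneg (hP0 z) hm0.le)
      rw [Finset.sum_congr rfl fun z _ => e2 z] at hcs2
      simp only [one_mul, one_pow, Finset.sum_const, Finset.card_univ, nsmul_eq_mul,
        mul_one] at hcs2
      have e3 : ∑ z, P z / m = 1 / m := by rw [← Finset.sum_div, hP1]
      rw [e3] at hcs2
      have hnn : 0 ≤ ∑ z, Real.sqrt (P z / m) :=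
        Finset.sum_nonneg fun z _ => Real.sqrt_nonneg _
      calc ∑ z, Real.sqrt (P z / m)
          = Real.sqrt ((∑ z, Real.sqrt (P z / m)) ^ 2) := (Real.sqrt_sq hnn).symm
        _ ≤ Real.sqrt ((Fintype.card Z : ℝ) * (1 / m)) := Real.sqrt_le_sqrt hcs2
        _ = Real.sqrt ((Fintype.card Z : ℝ) / m) := by rw [mul_one_div]
    -- final numeric bound
    have hlog : (1:ℝ) / 2 ≤ Real.log (1 + m) := by
      have h2m : (2:ℝ) ≤ 1 + m := by
        have : (1:ℝ) ≤ m := by exact_mod_cast hm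
        linarith
      have := Real.log_le_log (by norm_num : (0:ℝ) < 2) h2m
      have hl2 := Real.log_two_gt_d9
      linarith
    have hfin : Real.sqrt ((Fintype.card Z : ℝ) / m) / 2
        ≤ Real.sqrt ((Fintype.card Z : ℝ) * Real.log (1 + m) / (2 * m)) := by
      have h4 : Real.sqrt ((Fintype.card Z : ℝ) / m / 4)
          = Real.sqrt ((Fintype.card Z : ℝ) / m) / 2 := by
        rw [show ((Fintype.card Z : ℝ) / m / 4) = ((Fintype.card Z : ℝ) / m) * (1/2)^2 by
          ring]
        rw [Real.sqrt_mul (by positivity), Real.sqrt_sq (by norm_num)]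
        ring
      rw [← h4]
      refine Real.sqrt_le_sqrt ?_
      have e : (Fintype.card Z : ℝ) / m / 4 = (Fintype.card Z : ℝ) * (1/2) / (2 * m) := by
        ring
      rw [e]
      have hnum : (Fintype.card Z : ℝ) * (1/2) ≤ (Fintype.card Z : ℝ) * Real.log (1 + m) :=
        mul_le_mul_of_nonneg_left hlog (by positivity)
      exact (div_le_div_iff_of_pos_right (by positivity)).mpr hnum
    rw [haff]
    calc (∑ pr : Z × H, |margZ m P Q pr.1 * margH m P Q pr.2
          - jointZH m P Q pr.1 pr.2|) / 2
        ≤ (∑ z, Real.sqrt (P z / m)) / 2 := by linarith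
      _ ≤ Real.sqrt ((Fintype.card Z : ℝ) / m) / 2 := by linarith
      _ ≤ _ := hfin
  refine ⟨main, ?_⟩
  refine Real.sSup_le ?_ (Real.sqrt_nonneg _)
  rintro c ⟨P, hP, rfl⟩
  exact main P hP
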